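/- There exists a universal constant c > 0 such that the following holds: for any k matroids M_1 = (V, I_1), …, M_k = (V, I_k) over a common finite ground set V, any partition (S_1, …, S_k) of S ⊆ V with S_i ∈ I_i for all i ∈ [k], and any positive integer d, if the length of every (s, T)-path in the compressed exchange graph G(S_1, …, S_k) is at least d, then |S| ≥ (1 − c/d)·p, where p is the maximum size of a partitionable set. -/

import Mathlib

/-- A matroid on a finite ground set `V`, given by its family of independent sets. -/
structure FinMatroid (V : Type*) [DecidableEq V] [Fintype V] where
  Indep : Finset V → Prop
  indep_empty : Indep ∅
  indep_subset : ∀ ⦃S T : Finset V⦄, Indep S → T ⊆ S → Indep T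
  indep_aug : ∀ ⦃S T : Finset V⦄, Indep S → Indep T → T.card < S.card →
    ∃ x ∈ S \ T, Indep (insert x T)

/-- `S` is partitionable w.r.t. the matroids `M i`: it can be partitioned into
sets `P i` with `P i` independent in `M i`. -/
def Partitionable {V ι : Type*} [DecidableEq V] [Fintype V] [DecidableEq ι] [Fintype ι]
    (M : ι → FinMatroid V) (S : Finset V) : Prop :=
  ∃ P : ι → Finset V, (∀ i, (M i).Indep (P i)) ∧
    (∀ i j, i ≠ j → Disjoint (P i) (P j)) ∧ Finset.univ.biUnion P = S

/-- `reachIn Adj n x y` : there is a directed walk with exactly `n` edges from `x` to `y`. -/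
def reachIn {α : Type*} (Adj : α → α → Prop) : ℕ → α → α → Prop
  | 0, x, y => x = y
  | n + 1, x, y => ∃ z, Adj x z ∧ reachIn Adj n z y

/-- Distance (number of edges of a shortest directed path) from `x` to `y`; `⊤` if none. -/
noncomputable def ddist {α : Type*} (Adj : α → α → Prop) (x y : α) : ℕ∞ :=
  sInf {n : ℕ∞ | ∃ m : ℕ, n = (m : ℕ∞) ∧ reachIn Adj m x y}

/-- Vertices of the compressed exchange graph: ground elements, a source `src`,
and one sink `snk i` for each index `i`. -/
inductive CVert (V ι : Type*) where
  | elt : V → CVert V ι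
  | src : CVert V ι
  | snk : ι → CVert V ι

/-- The compressed exchange graph `G(S₁, …, S_k)` relative to the partition `P`. -/
def compAdj {V ι : Type*} [DecidableEq V] [Fintype V] [DecidableEq ι] [Fintype ι]
    (M : ι → FinMatroid V) (P : ι → Finset V) : CVert V ι → CVert V ι → Prop
  | CVert.elt v, CVert.elt u =>
      ∃ i, u ∈ P i ∧ ¬ (M i).Indep (insert v (P i)) ∧
        (M i).Indep (insert v ((P i).erase u))
  | CVert.src, CVert.elt v => v ∉ Finset.univ.biUnion P
  | CVert.elt v, CVert.snk i => v ∉ P i ∧ (M i).Indep (insert v (P i))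
  | _, _ => False

section Aux

open Finset

variable {V : Type*} [DecidableEq V] [Fintype V]

/-- If every element of `B` outside `A` cannot be independently added to `A`,
then `|B| ≤ |A|` (for `A`, `B` independent). -/
lemma FinMatroid.card_le_of_spans (M : FinMatroid V) {A B : Finset V}
    (hA : M.Indep A) (hB : M.Indep B)
    (h : ∀ v ∈ B, v ∉ A → ¬ M.Indep (insert v A)) : B.card ≤ A.card := by
  by_contra hc
  push_neg at hc
  obtain ⟨x, hx, hxi⟩ := M.indep_aug hB hA hc
  rw [mem_sdiff] at hx
  exact h x hx.1 hx.2 hxi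

open Classical in
/-- The "fundamental circuit" fact: if `A` is independent, `v ∉ A` and `insert v A`
is dependent, then `v` together with the elements `u ∈ A` for which
`insert v (A.erase u)` is independent already forms a dependent set. -/
lemma FinMatroid.fund_dep (M : FinMatroid V) {A : Finset V} {v : V}
    (hA : M.Indep A) (hv : v ∉ A) (hdep : ¬ M.Indep (insert v A)) :
    ¬ M.Indep (insert v (A.filter fun u => M.Indep (insert v (A.erase u)))) := by
  classical
  intro hC
  set C : Finset V := A.filter (fun u => M.Indep (insert v (A.erase u))) with hCdef
  have hCA : C ⊆ A := filter_subset _ _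
  set F : Finset (Finset V) := (insert v A).powerset.filter
      (fun J => M.Indep J ∧ insert v C ⊆ J) with hF
  have hmemF : insert v C ∈ F := by
    rw [hF, mem_filter, mem_powerset]
    exact ⟨insert_subset_insert _ hCA, hC, subset_rfl⟩
  obtain ⟨J, hJF, hJmax⟩ := F.exists_max_image card ⟨_, hmemF⟩
  rw [hF, mem_filter, mem_powerset] at hJF
  obtain ⟨hJsub, hJind, hJC⟩ := hJF
  have hvJ : v ∈ J := hJC (mem_insert_self _ _)
  have hJne : J ≠ insert v A := by
    rintro rfl; exact hdep hJind
  have hJssub : J ⊂ insert v A := Finset.ssubset_iff_subset_ne.2 ⟨hJsub, hJne⟩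
  have hJcard : J.card < (insert v A).card := card_lt_card hJssub
  rw [card_insert_of_notMem hv] at hJcard
  rcases lt_or_eq_of_le (Nat.lt_succ_iff.mp hJcard) with hlt | heq
  · obtain ⟨x, hx, hxi⟩ := M.indep_aug hA hJind hlt
    rw [mem_sdiff] at hx
    have hmem : insert x J ∈ F := by
      rw [hF, mem_filter, mem_powerset]
      exact ⟨insert_subset (mem_insert_of_mem hx.1) hJsub, hxi,
        hJC.trans (subset_insert _ _)⟩
    have h1 := hJmax _ hmem
    have h2 : J.card < (insert x J).card := by
      rw [card_insert_of_notMem hx.2]; omega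
    omega
  · obtain ⟨u, hu⟩ : ((insert v A) \ J).Nonempty := by
      rw [sdiff_nonempty]
      intro hsub
      exact hJne (Finset.Subset.antisymm hJsub hsub)
    rw [mem_sdiff] at hu
    have hune : u ≠ v := fun h => hu.2 (h ▸ hvJ)
    have huA : u ∈ A := by
      rcases mem_insert.mp hu.1 with h | h
      · exact absurd h hune
      · exact h
    have hJsub' : J ⊆ insert v (A.erase u) := by
      intro x hx
      rcases mem_insert.mp (hJsub hx) with h | h
      · exact h ▸ mem_insert_self _ _
      · refine mem_insert_of_mem (mem_erase.mpr ⟨?_, h⟩)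
        rintro rfl; exact hu.2 hx
    have hcard' : (insert v (A.erase u)).card ≤ J.card := by
      rw [card_insert_of_notMem (fun h => hv (erase_subset _ _ h)),
        card_erase_of_mem huA]
      have : 1 ≤ A.card := card_pos.mpr ⟨u, huA⟩
      omega
    have hJeq : J = insert v (A.erase u) := Finset.eq_of_subset_of_card_le hJsub' hcard'
    have huC : u ∈ C := by
      rw [hCdef, mem_filter]
      exact ⟨huA, hJeq ▸ hJind⟩
    exact hu.2 (hJC (mem_insert_of_mem huC))

lemma reachIn_snoc {α : Type*} {Adj : α → α → Prop} :
    ∀ {n : ℕ} {x y z : α}, reachIn Adj n x y → Adj y z → reachIn Adj (n + 1) x z := by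
  intro n
  induction n with
  | zero =>
    intro x y z h ha
    exact ⟨z, h ▸ ha, rfl⟩
  | succ n ih =>
    intro x y z h ha
    obtain ⟨w, hw, hr⟩ := h
    exact ⟨w, hw, ih hr ha⟩

open Classical in
/-- Vertices reachable from the source within `m` steps. -/
noncomputable def Rset {V ι : Type*} [Fintype V]
    (Adj : CVert V ι → CVert V ι → Prop) (m : ℕ) : Finset V :=
  Finset.univ.filter (fun v => ∃ j ≤ m, reachIn Adj j CVert.src (CVert.elt v))

lemma mem_Rset {V ι : Type*} [Fintype V] {Adj : CVert V ι → CVert V ι → Prop}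
    {m : ℕ} {v : V} :
    v ∈ Rset Adj m ↔ ∃ j ≤ m, reachIn Adj j CVert.src (CVert.elt v) := by
  classical
  simp [Rset]

lemma Rset_mono {V ι : Type*} [Fintype V] {Adj : CVert V ι → CVert V ι → Prop}
    {m m' : ℕ} (h : m ≤ m') : Rset Adj m ⊆ Rset Adj m' := by
  intro v hv
  obtain ⟨j, hj, hr⟩ := mem_Rset.mp hv
  exact mem_Rset.mpr ⟨j, hj.trans h, hr⟩

end Aux

/-- There is a universal constant `c > 0` such that: if every `(s,T)`-path of the
compressed exchange graph has length at least `d`, then `|S| ≥ (1 − c/d) · p`, where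
`p` is the maximum size of a partitionable set. -/
theorem distance_implies_large_partitionable_set :
    ∃ c : ℝ, 0 < c ∧
      ∀ (V ι : Type) [DecidableEq V] [Fintype V] [DecidableEq ι] [Fintype ι]
        (M : ι → FinMatroid V) (P : ι → Finset V) (S : Finset V),
        (∀ i, (M i).Indep (P i)) → (∀ i j, i ≠ j → Disjoint (P i) (P j)) →
        Finset.univ.biUnion P = S →
        ∀ d : ℕ, 0 < d →
        (∀ i : ι, (d : ℕ∞) ≤ ddist (compAdj M P) CVert.src (CVert.snk i)) →
        (1 - c / (d : ℝ)) *
            ((sSup {n : ℕ | ∃ T : Finset V, Partitionable M T ∧ T.card = n} : ℕ) : ℝ)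
          ≤ (S.card : ℝ) := by
  classical
  refine ⟨3, by norm_num, ?_⟩
  intro V ι _ _ _ _ M P S hPind hPdisj hPS d hd hdist
  open Finset in
  set Adj : CVert V ι → CVert V ι → Prop := compAdj M P with hAdjdef
  set pset : Set ℕ := {n : ℕ | ∃ T : Finset V, Partitionable M T ∧ T.card = n} with hpsetdef
  set p : ℕ := sSup pset with hpdef
  have hSp : S.card ∈ pset := ⟨S, ⟨P, hPind, hPdisj, hPS⟩, rfl⟩
  -- from the distance hypothesis: any walk from src to a sink has length ≥ d
  have hsink : ∀ (m : ℕ) (i : ι), reachIn Adj m CVert.src (CVert.snk i) → d ≤ m := by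
    intro m i hr
    have h1 : ddist Adj CVert.src (CVert.snk i) ≤ (m : ℕ∞) := sInf_le ⟨m, rfl, hr⟩
    have h2 : (d : ℕ∞) ≤ (m : ℕ∞) := le_trans (hdist i) h1
    exact_mod_cast h2
  -- elements outside S are reachable in one step
  have hout : ∀ v : V, v ∉ S → v ∈ Rset Adj 1 := by
    intro v hv
    refine mem_Rset.mpr ⟨1, le_refl _, ⟨CVert.elt v, ?_, rfl⟩⟩
    show v ∉ Finset.univ.biUnion P
    rw [hPS]; exact hv
  -- close vertices cannot be added to any part
  have hdep : ∀ (ℓ : ℕ) (v : V), ℓ + 2 ≤ d → v ∈ Rset Adj ℓ → ∀ i : ι, v ∉ P i →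
      ¬ (M i).Indep (insert v (P i)) := by
    intro ℓ v hℓ hv i hvi hind
    obtain ⟨j, hj, hr⟩ := mem_Rset.mp hv
    have hedge : Adj (CVert.elt v) (CVert.snk i) := ⟨hvi, hind⟩
    have := hsink (j + 1) i (reachIn_snoc hr hedge)
    omega
  -- close vertices are spanned by the close part of `P i`
  have hcirc : ∀ (ℓ : ℕ) (v : V), ℓ + 2 ≤ d → v ∈ Rset Adj ℓ → ∀ i : ι, v ∉ P i →
      ¬ (M i).Indep (insert v ((P i) ∩ Rset Adj (ℓ + 1))) := by
    intro ℓ v hℓ hv i hvi hind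
    have hdepv := hdep ℓ v hℓ hv i hvi
    refine (M i).fund_dep (hPind i) hvi hdepv ?_
    refine (M i).indep_subset hind (Finset.insert_subset_insert _ ?_)
    intro u hu
    rw [Finset.mem_filter] at hu
    refine Finset.mem_inter.mpr ⟨hu.1, ?_⟩
    obtain ⟨j, hj, hr⟩ := mem_Rset.mp hv
    have hedge : Adj (CVert.elt v) (CVert.elt u) := ⟨i, hu.1, hdepv, hu.2⟩
    exact mem_Rset.mpr ⟨j + 1, by omega, reachIn_snoc hr hedge⟩
  -- main counting bound: any partitionable size is at most |S ∩ R_{ℓ+1}| + |S \ R_ℓ|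
  have hmain : ∀ ℓ : ℕ, 1 ≤ ℓ → ℓ + 2 ≤ d → ∀ n ∈ pset,
      n ≤ (S ∩ Rset Adj (ℓ + 1)).card + (S \ Rset Adj ℓ).card := by
    intro ℓ hℓ1 hℓd n hn
    obtain ⟨T, ⟨Q, hQind, hQdisj, hQT⟩, hTn⟩ := hn
    have hcardT : n = ∑ i, (Q i).card := by
      rw [← hTn, ← hQT]
      exact Finset.card_biUnion (fun i _ j _ hij => hQdisj i j hij)
    have hpart : ∀ i, (Q i ∩ Rset Adj ℓ).card ≤ (P i ∩ Rset Adj (ℓ + 1)).card := by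
      intro i
      refine (M i).card_le_of_spans
        ((M i).indep_subset (hPind i) Finset.inter_subset_left)
        ((M i).indep_subset (hQind i) Finset.inter_subset_left) ?_
      intro v hv hvA hind
      rw [Finset.mem_inter] at hv
      have hvR1 : v ∈ Rset Adj (ℓ + 1) := Rset_mono (Nat.le_succ _) hv.2
      have hvPi : v ∉ P i := fun h => hvA (Finset.mem_inter.mpr ⟨h, hvR1⟩)
      exact hcirc ℓ v hℓd hv.2 i hvPi hind
    have hsum1 : ∑ i, (P i ∩ Rset Adj (ℓ + 1)).card = (S ∩ Rset Adj (ℓ + 1)).card := by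
      rw [← hPS]
      rw [← Finset.card_biUnion
        (fun i _ j _ hij => Finset.disjoint_left.mpr
          (fun a ha ha' => Finset.disjoint_left.mp (hPdisj i j hij)
            (Finset.mem_inter.mp ha).1 (Finset.mem_inter.mp ha').1))]
      congr 1
      ext a
      simp only [Finset.mem_biUnion, Finset.mem_inter, Finset.mem_univ, true_and]
      tauto
    have hsum2 : ∑ i, (Q i \ Rset Adj ℓ).card = (T \ Rset Adj ℓ).card := by
      rw [← hQT]
      rw [← Finset.card_biUnion
        (fun i _ j _ hij => Finset.disjoint_left.mpr
          (fun a ha ha' => Finset.disjoint_left.mp (hQdisj i j hij)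
            (Finset.mem_sdiff.mp ha).1 (Finset.mem_sdiff.mp ha').1))]
      congr 1
      ext a
      simp only [Finset.mem_biUnion, Finset.mem_sdiff, Finset.mem_univ, true_and]
      tauto
    have hTS : T \ Rset Adj ℓ ⊆ S \ Rset Adj ℓ := by
      intro v hv
      rw [Finset.mem_sdiff] at hv ⊢
      refine ⟨?_, hv.2⟩
      by_contra hvS
      exact hv.2 (Rset_mono hℓ1 (hout v hvS))
    calc n = ∑ i, (Q i).card := hcardT
      _ = ∑ i, ((Q i ∩ Rset Adj ℓ).card + (Q i \ Rset Adj ℓ).card) := by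
          refine Finset.sum_congr rfl fun i _ => ?_
          rw [Finset.card_inter_add_card_sdiff]
      _ = ∑ i, (Q i ∩ Rset Adj ℓ).card + ∑ i, (Q i \ Rset Adj ℓ).card :=
          Finset.sum_add_distrib
      _ ≤ ∑ i, (P i ∩ Rset Adj (ℓ + 1)).card + ∑ i, (Q i \ Rset Adj ℓ).card :=
          Nat.add_le_add_right (Finset.sum_le_sum fun i _ => hpart i) _
      _ = (S ∩ Rset Adj (ℓ + 1)).card + (T \ Rset Adj ℓ).card := by rw [hsum1, hsum2]
      _ ≤ (S ∩ Rset Adj (ℓ + 1)).card + (S \ Rset Adj ℓ).card :=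
          Nat.add_le_add_left (Finset.card_le_card hTS) _
  -- the key natural-number inequality
  have key : d * p ≤ d * S.card + 3 * p := by
    rcases le_or_gt d 3 with h3 | h4
    · have hub : ∀ n ∈ pset, n ≤ Fintype.card V := by
        intro n hn
        obtain ⟨T, _, hTn⟩ := hn
        exact hTn ▸ T.card_le_univ
      have hSub : S.card ≤ p := le_csSup ⟨Fintype.card V, hub⟩ hSp
      calc d * p ≤ 3 * p := Nat.mul_le_mul_right _ h3
        _ ≤ d * S.card + 3 * p := Nat.le_add_left _ _
    · -- d ≥ 4 : pigeonhole over layers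
      set f : ℕ → ℕ := fun m => (S ∩ (Rset Adj (m + 1) \ Rset Adj m)).card with hfdef
      have hlayerdisj : ∀ m m', m ≠ m' →
          Disjoint (S ∩ (Rset Adj (m + 1) \ Rset Adj m))
            (S ∩ (Rset Adj (m' + 1) \ Rset Adj m')) := by
        have haux : ∀ m m', m < m' →
            Disjoint (S ∩ (Rset Adj (m + 1) \ Rset Adj m))
              (S ∩ (Rset Adj (m' + 1) \ Rset Adj m')) := by
          intro m m' hmm'
          rw [Finset.disjoint_left]
          intro a ha ha'
          rw [Finset.mem_inter, Finset.mem_sdiff] at ha ha'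
          exact ha'.2.2 (Rset_mono (by omega : m + 1 ≤ m') ha.2.1)
        intro m m' hne
        rcases lt_or_gt_of_ne hne with h | h
        · exact haux m m' h
        · exact (haux m' m h).symm
      have hsumf : ∑ m ∈ Finset.Icc 1 (d - 2), f m ≤ S.card := by
        rw [← Finset.card_biUnion (fun m _ m' _ hne => hlayerdisj m m' hne)]
        refine Finset.card_le_card ?_
        intro a ha
        rw [Finset.mem_biUnion] at ha
        obtain ⟨m, _, ha⟩ := ha
        exact (Finset.mem_inter.mp ha).1
      obtain ⟨ℓ, hℓI, hℓmin⟩ := (Finset.Icc 1 (d - 2)).exists_min_image f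
        ⟨1, by rw [Finset.mem_Icc]; omega⟩
      have hIcard : (Finset.Icc 1 (d - 2)).card = d - 2 := by
        rw [Nat.card_Icc]; omega
      have hpig : (d - 2) * f ℓ ≤ S.card := by
        calc (d - 2) * f ℓ = ∑ _m ∈ Finset.Icc 1 (d - 2), f ℓ := by
              rw [Finset.sum_const, hIcard, smul_eq_mul]
          _ ≤ ∑ m ∈ Finset.Icc 1 (d - 2), f m :=
              Finset.sum_le_sum fun m hm => hℓmin m hm
          _ ≤ S.card := hsumf
      rw [Finset.mem_Icc] at hℓI
      have hub : ∀ n ∈ pset, n ≤ S.card + f ℓ := by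
        intro n hn
        have h1 := hmain ℓ hℓI.1 (by omega) n hn
        have hsplit : (S ∩ Rset Adj (ℓ + 1)).card = (S ∩ Rset Adj ℓ).card + f ℓ := by
          rw [hfdef]
          rw [← Finset.card_union_of_disjoint]
          · congr 1
            ext a
            simp only [Finset.mem_union, Finset.mem_inter, Finset.mem_sdiff]
            constructor
            · rintro ⟨haS, haR⟩
              by_cases h : a ∈ Rset Adj ℓ
              · exact Or.inl ⟨haS, h⟩
              · exact Or.inr ⟨haS, haR, h⟩
            · rintro (⟨haS, haR⟩ | ⟨haS, haR, _⟩)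
              · exact ⟨haS, Rset_mono (Nat.le_succ _) haR⟩
              · exact ⟨haS, haR⟩
          · rw [Finset.disjoint_left]
            intro a ha ha'
            rw [Finset.mem_inter] at ha
            rw [Finset.mem_inter, Finset.mem_sdiff] at ha'
            exact ha'.2.2 ha.2
        have h2 : (S ∩ Rset Adj ℓ).card + (S \ Rset Adj ℓ).card = S.card :=
          Finset.card_inter_add_card_sdiff S (Rset Adj ℓ)
        omega
      have hple : p ≤ S.card + f ℓ := csSup_le ⟨_, hSp⟩ hub
      have hSle : S.card ≤ p := le_csSup ⟨S.card + f ℓ, hub⟩ hSp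
      have h1 : d * p ≤ d * S.card + d * f ℓ := by
        calc d * p ≤ d * (S.card + f ℓ) := Nat.mul_le_mul_left _ hple
          _ = d * S.card + d * f ℓ := Nat.mul_add _ _ _
      have h2 : d * f ℓ ≤ 3 * ((d - 2) * f ℓ) := by
        rw [← Nat.mul_assoc]
        exact Nat.mul_le_mul_right _ (by omega)
      have h3 : 3 * ((d - 2) * f ℓ) ≤ 3 * p :=
        Nat.mul_le_mul_left _ (hpig.trans hSle)
      omega
  -- pass to the reals
  have hd0 : (0 : ℝ) < (d : ℝ) := by exact_mod_cast hd
  have keyR : (d : ℝ) * p ≤ (d : ℝ) * S.card + 3 * p := by exact_mod_cast key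
  rw [← mul_le_mul_iff_of_pos_right hd0]
  have hexp : (1 - 3 / (d : ℝ)) * (p : ℝ) * (d : ℝ) = (d : ℝ) * p - 3 * p := by
    field_simp
  rw [hexp]
  nlinarith [keyR, Nat.cast_nonneg (α := ℝ) S.card]
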